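/- Let A be a unital C*-algebra and T : A → A a unital completely positive linear map. Then the function f ↦ ‖T(f* f) − T(f)* T(f)‖^{1/2} is a seminorm on A, i.e. it is nonnegative, absolutely homogeneous, and satisfies the triangle inequality. -/

import Mathlib

open Matrix

section Aux

variable {A : Type*} [NormedRing A] [StarRing A] [CStarRing A] [CompleteSpace A]
    [NormedAlgebra ℂ A] [StarModule ℂ A]

/-- A unital completely positive map is star-preserving. -/
lemma stmt0_aux_star (T : A →ₗ[ℂ] A)
    (hCP : ∀ (n : ℕ) (M : Matrix (Fin n) (Fin n) A),
      (∃ B : Matrix (Fin n) (Fin n) A, M = Bᴴ * B) →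
      ∃ B : Matrix (Fin n) (Fin n) A, M.map T = Bᴴ * B)
    (f : A) : T (star f) = star (T f) := by
  set M : Matrix (Fin 2) (Fin 2) A := Matrix.of ![![1, f], ![star f, star f * f]] with hM
  have hpos : ∃ B : Matrix (Fin 2) (Fin 2) A, M = Bᴴ * B := by
    refine ⟨Matrix.of ![![1, f], ![0, 0]], ?_⟩
    ext i j
    fin_cases i <;> fin_cases j <;>
      simp [hM, Matrix.mul_apply, Fin.sum_univ_two, conjTranspose_apply]
  obtain ⟨C, hC⟩ := hCP 2 M hpos
  have herm : (Cᴴ * C)ᴴ = Cᴴ * C := by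
    rw [conjTranspose_mul, conjTranspose_conjTranspose]
  have h10 : (M.map T) 1 0 = star ((M.map T) 0 1) := by
    rw [hC, ← conjTranspose_apply, herm]
  simpa [hM, Matrix.map_apply] using h10

/-- The Kadison–Schwarz inequality for a unital completely positive map. -/
lemma stmt0_aux_schwarz [PartialOrder A] [StarOrderedRing A]
    (T : A →ₗ[ℂ] A) (hT1 : T 1 = 1)
    (hCP : ∀ (n : ℕ) (M : Matrix (Fin n) (Fin n) A),
      (∃ B : Matrix (Fin n) (Fin n) A, M = Bᴴ * B) →
      ∃ B : Matrix (Fin n) (Fin n) A, M.map T = Bᴴ * B)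
    (h : A) : 0 ≤ T (star h * h) - star (T h) * T h := by
  have hTs := stmt0_aux_star T hCP
  set M : Matrix (Fin 2) (Fin 2) A := Matrix.of ![![star h * h, star h], ![h, 1]] with hM
  have hpos : ∃ B : Matrix (Fin 2) (Fin 2) A, M = Bᴴ * B := by
    refine ⟨Matrix.of ![![h, 1], ![0, 0]], ?_⟩
    ext i j
    fin_cases i <;> fin_cases j <;>
      simp [hM, Matrix.mul_apply, Fin.sum_univ_two, conjTranspose_apply]
  obtain ⟨C, hC⟩ := hCP 2 M hpos
  set v : Fin 2 → A := ![1, -(T h)] with hv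
  have quad : ∑ i, ∑ j, star (v i) * ((Cᴴ * C) i j) * v j
      = ∑ k, star ((C *ᵥ v) k) * ((C *ᵥ v) k) := by
    simp only [Matrix.mul_apply, Matrix.mulVec, dotProduct, conjTranspose_apply,
      Fin.sum_univ_two, star_add, StarMul.star_mul]
    noncomm_ring
  have key : T (star h * h) - star (T h) * T h
      = ∑ i, ∑ j, star (v i) * ((M.map T) i j) * v j := by
    simp only [Fin.sum_univ_two, hM, hv, Matrix.map_apply]
    simp [hTs, hT1]
    noncomm_ring
  rw [key, hC, quad]
  exact Finset.sum_nonneg fun k _ => star_mul_self_nonneg _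

/-- The polarization-type identity underlying the triangle inequality. -/
lemma stmt0_aux_key (T : A →ₗ[ℂ] A) (f g : A) (u v : ℂ)
    (hu : star u = u) (hv : star v = v) (huv : u * v = 1) :
    (T (star (f + g) * (f + g)) - star (T (f + g)) * T (f + g))
      + (T (star (u • f - v • g) * (u • f - v • g))
          - star (T (u • f - v • g)) * T (u • f - v • g))
      = (1 + u * u) • (T (star f * f) - star (T f) * T f)
        + (1 + v * v) • (T (star g * g) - star (T g) * T g) := by
  simp only [star_add, star_sub, star_smul, hu, hv, add_mul, mul_add, sub_mul, mul_sub,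
    smul_mul_assoc, mul_smul_comm, smul_smul, map_add, map_sub, LinearMap.map_smul, smul_sub,
    smul_add]
  match_scalars <;>
    first
      | ring1
      | linear_combination (-(1 + u * v)) * huv
      | linear_combination (-(u * v + 2)) * huv
      | linear_combination huv
      | linear_combination -huv

end Aux

set_option maxHeartbeats 1000000 in
/-- For a unital completely positive linear map `T` on a unital C*-algebra `A`,
the function `f ↦ ‖T(f* f) − T(f)* T(f)‖^{1/2}` is a seminorm: nonnegative, absolutely
homogeneous and subadditive. Complete positivity is expressed via the matrix amplifications
`M ↦ M.map T`, positivity of an element of `Mₙ(A)` meaning it is of the form `Bᴴ * B`. -/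
theorem stmt0 {A : Type*} [NormedRing A] [StarRing A] [CStarRing A] [CompleteSpace A]
    [NormedAlgebra ℂ A] [StarModule ℂ A]
    (T : A →ₗ[ℂ] A) (hT1 : T 1 = 1)
    (hCP : ∀ (n : ℕ) (M : Matrix (Fin n) (Fin n) A),
      (∃ B : Matrix (Fin n) (Fin n) A, M = Bᴴ * B) →
      ∃ B : Matrix (Fin n) (Fin n) A, M.map T = Bᴴ * B) :
    (∀ f : A, 0 ≤ Real.sqrt ‖T (star f * f) - star (T f) * T f‖) ∧
    (∀ (c : ℂ) (f : A),
      Real.sqrt ‖T (star (c • f) * (c • f)) - star (T (c • f)) * T (c • f)‖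
        = ‖c‖ * Real.sqrt ‖T (star f * f) - star (T f) * T f‖) ∧
    (∀ f g : A,
      Real.sqrt ‖T (star (f + g) * (f + g)) - star (T (f + g)) * T (f + g)‖
        ≤ Real.sqrt ‖T (star f * f) - star (T f) * T f‖
          + Real.sqrt ‖T (star g * g) - star (T g) * T g‖) := by
  letI : CStarAlgebra A := { }
  letI := CStarAlgebra.spectralOrder A
  haveI := CStarAlgebra.spectralOrderedRing A
  set D : A → A := fun x => T (star x * x) - star (T x) * T x with hD
  have schwarz : ∀ h : A, 0 ≤ D h := fun h => stmt0_aux_schwarz T hT1 hCP h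
  refine ⟨fun f => Real.sqrt_nonneg _, ?_, ?_⟩
  · -- homogeneity
    intro c f
    have hsm : D (c • f) = (c * star c) • D f := by
      simp only [hD, star_smul, LinearMap.map_smul, smul_mul_assoc, mul_smul_comm, smul_smul,
        smul_sub]
    have hnorm : ‖D (c • f)‖ = (‖c‖ * ‖c‖) * ‖D f‖ := by
      rw [hsm, norm_smul, norm_mul, norm_star, mul_comm (‖c‖) (‖c‖)]
    show Real.sqrt ‖D (c • f)‖ = ‖c‖ * Real.sqrt ‖D f‖
    rw [hnorm, Real.sqrt_mul (by positivity), Real.sqrt_mul_self (norm_nonneg c)]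
  · -- triangle inequality
    intro f g
    set a := ‖D f‖ with ha
    set b := ‖D g‖ with hb
    have ha0 : 0 ≤ a := norm_nonneg _
    have hb0 : 0 ≤ b := norm_nonneg _
    have bound : ∀ t : ℝ, 0 < t → ‖D (f + g)‖ ≤ (1 + t⁻¹) * a + (1 + t) * b := by
      intro t ht
      set s := Real.sqrt t with hsdef
      have hs : 0 < s := Real.sqrt_pos.2 ht
      set u : ℂ := ((s⁻¹ : ℝ) : ℂ) with hudef
      set v : ℂ := ((s : ℝ) : ℂ) with hvdef
      have hu : star u = u := by simp [hudef, Complex.star_def, Complex.conj_ofReal]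
      have hv : star v = v := by simp [hvdef, Complex.star_def, Complex.conj_ofReal]
      have huv : u * v = 1 := by
        rw [hudef, hvdef, ← Complex.ofReal_mul, inv_mul_cancel₀ hs.ne', Complex.ofReal_one]
      have hkey : D (f + g) + D (u • f - v • g) = (1 + u * u) • D f + (1 + v * v) • D g :=
        stmt0_aux_key T f g u v hu hv huv
      have hle : D (f + g) ≤ (1 + u * u) • D f + (1 + v * v) • D g := by
        rw [← hkey]
        exact le_add_of_nonneg_right (schwarz _)
      have h1 : ‖D (f + g)‖ ≤ ‖(1 + u * u) • D f + (1 + v * v) • D g‖ :=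
        CStarAlgebra.norm_le_norm_of_nonneg_of_le (schwarz _) hle
      have huu : (1 : ℂ) + u * u = ((1 + t⁻¹ : ℝ) : ℂ) := by
        rw [hudef, ← Complex.ofReal_mul]
        have : s⁻¹ * s⁻¹ = t⁻¹ := by
          rw [← mul_inv, Real.mul_self_sqrt ht.le]
        rw [this]; push_cast; ring
      have hvv : (1 : ℂ) + v * v = ((1 + t : ℝ) : ℂ) := by
        rw [hvdef, ← Complex.ofReal_mul, Real.mul_self_sqrt ht.le]; push_cast; ring
      have h2 : ‖(1 + u * u) • D f + (1 + v * v) • D g‖ ≤ (1 + t⁻¹) * a + (1 + t) * b := by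
        refine (norm_add_le _ _).trans ?_
        rw [norm_smul, norm_smul, huu, hvv]
        have e1 : ‖((1 + t⁻¹ : ℝ) : ℂ)‖ = 1 + t⁻¹ := by
          rw [Complex.norm_real, Real.norm_eq_abs, abs_of_nonneg (by positivity)]
        have e2 : ‖((1 + t : ℝ) : ℂ)‖ = 1 + t := by
          rw [Complex.norm_real, Real.norm_eq_abs, abs_of_nonneg (by positivity)]
        rw [e1, e2]
      exact h1.trans h2
    have main : ‖D (f + g)‖ ≤ (Real.sqrt a + Real.sqrt b) ^ 2 := by
      rcases eq_or_lt_of_le ha0 with haz | hap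
      · -- a = 0
        have hXb : ‖D (f + g)‖ ≤ b := by
          refine le_of_forall_pos_le_add fun ε hε => ?_
          rcases eq_or_lt_of_le hb0 with hbz | hbp
          · have := bound 1 one_pos
            rw [← haz, ← hbz] at this
            have h0 : ‖D (f + g)‖ ≤ 0 := by simpa using this
            exact h0.trans (by positivity)
          · have := bound (ε / b) (div_pos hε hbp)
            rw [← haz] at this
            calc ‖D (f + g)‖ ≤ (1 + (ε / b)⁻¹) * 0 + (1 + ε / b) * b := this
              _ = b + ε := by field_simp; ring
        refine hXb.trans ?_
        rw [← haz, Real.sqrt_zero, zero_add, Real.sq_sqrt hb0]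
      rcases eq_or_lt_of_le hb0 with hbz | hbp
      · -- b = 0
        have hXa : ‖D (f + g)‖ ≤ a := by
          refine le_of_forall_pos_le_add fun ε hε => ?_
          have := bound (a / ε) (div_pos hap hε)
          rw [← hbz] at this
          calc ‖D (f + g)‖ ≤ (1 + (a / ε)⁻¹) * a + (1 + a / ε) * 0 := this
            _ = a + ε := by field_simp; try ring
        refine hXa.trans ?_
        rw [← hbz, Real.sqrt_zero, add_zero, Real.sq_sqrt ha0]
      · -- a > 0, b > 0
        set sa := Real.sqrt a with hsa
        set sb := Real.sqrt b with hsb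
        have hsap : 0 < sa := Real.sqrt_pos.2 hap
        have hsbp : 0 < sb := Real.sqrt_pos.2 hbp
        have ht : 0 < sa / sb := div_pos hsap hsbp
        refine (bound _ ht).trans (le_of_eq ?_)
        have ea : a = sa ^ 2 := (Real.sq_sqrt ha0).symm
        have eb : b = sb ^ 2 := (Real.sq_sqrt hb0).symm
        rw [ea, eb]
        field_simp
        try ring
    calc Real.sqrt ‖D (f + g)‖ ≤ Real.sqrt ((Real.sqrt a + Real.sqrt b) ^ 2) :=
          Real.sqrt_le_sqrt main
      _ = Real.sqrt a + Real.sqrt b := Real.sqrt_sq (by positivity)
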